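/- The number of partitions with perimeter n into distinct parts equals the number of partitions with perimeter n into odd parts. -/

import Mathlib

/-- A partition: a nonempty, nonincreasing list of positive integers. -/
def IsPartition (l : List ℕ) : Prop :=
  l ≠ [] ∧ l.Pairwise (· ≥ ·) ∧ ∀ x ∈ l, 0 < x

/-- Perimeter: (largest part) + (number of parts) - 1. -/
def perimeter (l : List ℕ) : ℕ := l.headI + l.length - 1

/-- d-distinct: consecutive parts differ by at least d. -/
def DDistinct (d : ℕ) (l : List ℕ) : Prop := l.Chain' (fun x y => y + d ≤ x)

/-- Convenient restatement of "distinct partition with perimeter `n`". -/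
def QA (n : ℕ) (l : List ℕ) : Prop :=
  l ≠ [] ∧ l.Chain' (· > ·) ∧ (∀ x ∈ l, 0 < x) ∧ l.headI + l.length = n + 1

/-- Convenient restatement of "odd partition with perimeter `n`". -/
def QB (n : ℕ) (l : List ℕ) : Prop :=
  l ≠ [] ∧ l.Chain' (· ≥ ·) ∧ (∀ x ∈ l, Odd x) ∧ l.headI + l.length = n + 1

lemma QA_iff (n : ℕ) (l : List ℕ) :
    (IsPartition l ∧ perimeter l = n ∧ l.Nodup) ↔ QA n l := by
  constructor
  · rintro ⟨⟨ne, hs, pos⟩, hper, hnd⟩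
    have hlen : 0 < l.length := List.length_pos_iff.mpr ne
    refine ⟨ne, ?_, pos, ?_⟩
    · refine List.isChain_iff_pairwise.mpr ?_
      exact (hs.and hnd).imp fun h => lt_of_le_of_ne h.1 h.2.symm
    · simp only [perimeter] at hper; omega
  · rintro ⟨ne, ch, pos, hsum⟩
    have hp := List.isChain_iff_pairwise.mp ch
    refine ⟨⟨ne, hp.imp fun h => le_of_lt h, pos⟩, ?_, hp.imp fun h => (ne_of_gt h)⟩
    simp only [perimeter]; omega

lemma QB_iff (n : ℕ) (l : List ℕ) :
    (IsPartition l ∧ perimeter l = n ∧ ∀ x ∈ l, Odd x) ↔ QB n l := by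
  constructor
  · rintro ⟨⟨ne, hs, pos⟩, hper, hodd⟩
    have hlen : 0 < l.length := List.length_pos_iff.mpr ne
    refine ⟨ne, List.isChain_iff_pairwise.mpr hs, hodd, ?_⟩
    simp only [perimeter] at hper; omega
  · rintro ⟨ne, ch, hodd, hsum⟩
    refine ⟨⟨ne, List.isChain_iff_pairwise.mp ch, fun x hx => (hodd x hx).pos⟩, ?_, hodd⟩
    simp only [perimeter]; omega

open Fin.NatCast in
lemma finiteAux (n : ℕ) (P : List ℕ → Prop)
    (h : ∀ l, P l → l.length ≤ n ∧ ∀ x ∈ l, x < n + 1) :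
    {l | P l}.Finite := by
  have hsub : {l | P l} ⊆
      (fun l : List (Fin (n + 1)) => l.map Fin.val) '' {l | l.length ≤ n} := by
    intro l hl
    refine ⟨l.map (fun x : ℕ => (x : Fin (n + 1))), by simpa using (h l hl).1, ?_⟩
    show List.map Fin.val (l.map fun x : ℕ => (x : Fin (n + 1))) = l
    rw [List.map_map]
    have : ∀ x ∈ l, (Fin.val ∘ fun x : ℕ => (x : Fin (n + 1))) x = id x := by
      intro x hx
      simp [Fin.val_cast_of_lt ((h l hl).2 x hx)]
    rw [List.map_congr_left this, List.map_id]
  exact (((List.finite_length_le (Fin (n + 1)) n)).image _).subset hsub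

lemma finQA (n : ℕ) : {l | QA n l}.Finite := by
  apply finiteAux n
  rintro l ⟨ne, ch, pos, hsum⟩
  obtain ⟨a, t, rfl⟩ := List.exists_cons_of_ne_nil ne
  have ha : 0 < a := pos a (by simp)
  have hmem : ∀ x ∈ t, x < a := by
    have := List.isChain_iff_pairwise.mp ch
    intro x hx
    exact (List.pairwise_cons.mp this).1 x hx
  simp only [List.headI_cons, List.length_cons] at hsum
  constructor
  · simp only [List.length_cons]; omega
  · intro x hx
    rcases List.mem_cons.mp hx with rfl | hx
    · omega
    · have := hmem x hx; omega

lemma finQB (n : ℕ) : {l | QB n l}.Finite := by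
  apply finiteAux n
  rintro l ⟨ne, ch, hodd, hsum⟩
  obtain ⟨a, t, rfl⟩ := List.exists_cons_of_ne_nil ne
  have ha : 0 < a := (hodd a (by simp)).pos
  have hmem : ∀ x ∈ t, x ≤ a := by
    have := List.isChain_iff_pairwise.mp ch
    intro x hx
    exact (List.pairwise_cons.mp this).1 x hx
  simp only [List.headI_cons, List.length_cons] at hsum
  constructor
  · simp only [List.length_cons]; omega
  · intro x hx
    rcases List.mem_cons.mp hx with rfl | hx
    · omega
    · have := hmem x hx; omega

lemma recurA (m : ℕ) :
    {l | QA (m + 3) l}.ncard = {l | QA (m + 2) l}.ncard + {l | QA (m + 1) l}.ncard := by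
  set u1 : List ℕ → List ℕ := fun l => (l.headI + 1) :: l.tail with hu1
  set u2 : List ℕ → List ℕ := fun l => (l.headI + 1) :: l with hu2
  have himg1 : u1 '' {l | QA (m + 2) l} ⊆ {l | QA (m + 3) l} := by
    rintro _ ⟨l, ⟨ne, ch, pos, hsum⟩, rfl⟩
    obtain ⟨a, t, rfl⟩ := List.exists_cons_of_ne_nil ne
    simp only [List.headI_cons, List.length_cons] at hsum
    show QA (m + 3) (u1 (a :: t))
    rw [show u1 (a :: t) = (a + 1) :: t from rfl]
    refine ⟨by simp, ?_, ?_, by simp only [List.headI_cons, List.length_cons]; omega⟩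
    · match t, ch with
      | [], _ => exact List.isChain_singleton _
      | b :: t', ch =>
        exact List.isChain_cons_cons.mpr
          ⟨by have := (List.isChain_cons_cons.mp ch).1; omega, (List.isChain_cons_cons.mp ch).2⟩
    · intro x hx
      rcases List.mem_cons.mp hx with rfl | hx
      · omega
      · exact pos x (List.mem_cons.mpr (Or.inr hx))
  have himg2 : u2 '' {l | QA (m + 1) l} ⊆ {l | QA (m + 3) l} := by
    rintro _ ⟨l, ⟨ne, ch, pos, hsum⟩, rfl⟩
    obtain ⟨a, t, rfl⟩ := List.exists_cons_of_ne_nil ne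
    simp only [List.headI_cons, List.length_cons] at hsum
    show QA (m + 3) (u2 (a :: t))
    rw [show u2 (a :: t) = (a + 1) :: a :: t from rfl]
    refine ⟨by simp, List.isChain_cons_cons.mpr ⟨by omega, ch⟩, ?_,
      by simp only [List.headI_cons, List.length_cons]; omega⟩
    intro x hx
    rcases List.mem_cons.mp hx with rfl | hx
    · omega
    · exact pos x hx
  have hsplit : {l | QA (m + 3) l}
      = u1 '' {l | QA (m + 2) l} ∪ u2 '' {l | QA (m + 1) l} := by
    apply Set.Subset.antisymm
    · rintro l ⟨ne, ch, pos, hsum⟩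
      match l, ne, ch, pos, hsum with
      | [a], _, _, pos, hsum =>
        left
        simp only [List.headI_cons, List.length_cons, List.length_nil] at hsum
        refine ⟨[m + 2], ⟨by simp, List.isChain_singleton _, by simp, by simp⟩, ?_⟩
        rw [show u1 [m + 2] = [m + 3] from rfl]
        have : a = m + 3 := by omega
        rw [this]
      | a :: b :: t, _, ch, pos, hsum =>
        have h1 := (List.isChain_cons_cons.mp ch).1
        have h2 := (List.isChain_cons_cons.mp ch).2
        have hb : 0 < b := pos b (by simp)
        simp only [List.headI_cons, List.length_cons] at hsum
        by_cases hab : a = b + 1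
        · right
          refine ⟨b :: t, ⟨by simp, h2,
            fun x hx => pos x (List.mem_cons.mpr (Or.inr hx)), ?_⟩, ?_⟩
          · simp only [List.headI_cons, List.length_cons]; omega
          · rw [show u2 (b :: t) = (b + 1) :: b :: t from rfl, hab]
        · left
          refine ⟨(a - 1) :: b :: t, ⟨by simp, ?_, ?_, ?_⟩, ?_⟩
          · exact List.isChain_cons_cons.mpr ⟨by omega, h2⟩
          · intro x hx
            rcases List.mem_cons.mp hx with rfl | hx
            · omega
            · exact pos x (List.mem_cons.mpr (Or.inr hx))
          · simp only [List.headI_cons, List.length_cons]; omega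
          · rw [show u1 ((a - 1) :: b :: t) = (a - 1 + 1) :: b :: t from rfl]
            have : a - 1 + 1 = a := by omega
            rw [this]
    · exact Set.union_subset himg1 himg2
  have hdisj : Disjoint (u1 '' {l | QA (m + 2) l}) (u2 '' {l | QA (m + 1) l}) := by
    rw [Set.disjoint_left]
    rintro _ ⟨l, ⟨ne, ch, pos, hsum⟩, rfl⟩ ⟨l', ⟨ne', ch', pos', hsum'⟩, heq⟩
    obtain ⟨a, t, rfl⟩ := List.exists_cons_of_ne_nil ne
    obtain ⟨a', t', rfl⟩ := List.exists_cons_of_ne_nil ne'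
    rw [show u2 (a' :: t') = (a' + 1) :: a' :: t' from rfl,
      show u1 (a :: t) = (a + 1) :: t from rfl] at heq
    rcases t with _ | ⟨b, t''⟩
    · simp at heq
    · have h1 := (List.isChain_cons_cons.mp ch).1
      simp only [List.cons.injEq] at heq
      omega
  have hinj1 : Set.InjOn u1 {l | QA (m + 2) l} := by
    rintro l hl l' hl' heq
    obtain ⟨a, t, rfl⟩ := List.exists_cons_of_ne_nil hl.1
    obtain ⟨a', t', rfl⟩ := List.exists_cons_of_ne_nil hl'.1
    rw [show u1 (a :: t) = (a + 1) :: t from rfl,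
      show u1 (a' :: t') = (a' + 1) :: t' from rfl] at heq
    simp only [List.cons.injEq] at heq
    obtain ⟨h1, h2⟩ := heq
    have : a = a' := by omega
    rw [this, h2]
  have hinj2 : Set.InjOn u2 {l | QA (m + 1) l} := by
    rintro l _ l' _ heq
    simp only [hu2, List.cons.injEq] at heq
    exact heq.2
  rw [hsplit, Set.ncard_union_eq hdisj ((finQA (m + 2)).image _) ((finQA (m + 1)).image _),
    Set.ncard_image_of_injOn hinj1, Set.ncard_image_of_injOn hinj2]

lemma recurB (m : ℕ) :
    {l | QB (m + 3) l}.ncard = {l | QB (m + 2) l}.ncard + {l | QB (m + 1) l}.ncard := by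
  set v1 : List ℕ → List ℕ := fun l => l.headI :: l with hv1
  set v2 : List ℕ → List ℕ := fun l => (l.headI + 2) :: l.tail with hv2
  have himg1 : v1 '' {l | QB (m + 2) l} ⊆ {l | QB (m + 3) l} := by
    rintro _ ⟨l, ⟨ne, ch, hodd, hsum⟩, rfl⟩
    obtain ⟨a, t, rfl⟩ := List.exists_cons_of_ne_nil ne
    simp only [List.headI_cons, List.length_cons] at hsum
    show QB (m + 3) (v1 (a :: t))
    rw [show v1 (a :: t) = a :: a :: t from rfl]
    refine ⟨by simp, List.isChain_cons_cons.mpr ⟨le_refl _, ch⟩, ?_,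
      by simp only [List.headI_cons, List.length_cons]; omega⟩
    intro x hx
    rcases List.mem_cons.mp hx with rfl | hx
    · exact hodd x (by simp)
    · exact hodd x hx
  have himg2 : v2 '' {l | QB (m + 1) l} ⊆ {l | QB (m + 3) l} := by
    rintro _ ⟨l, ⟨ne, ch, hodd, hsum⟩, rfl⟩
    obtain ⟨a, t, rfl⟩ := List.exists_cons_of_ne_nil ne
    simp only [List.headI_cons, List.length_cons] at hsum
    have hao : Odd a := hodd a (by simp)
    show QB (m + 3) (v2 (a :: t))
    rw [show v2 (a :: t) = (a + 2) :: t from rfl]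
    refine ⟨by simp, ?_, ?_, by simp only [List.headI_cons, List.length_cons]; omega⟩
    · match t, ch with
      | [], _ => exact List.isChain_singleton _
      | b :: t', ch =>
        exact List.isChain_cons_cons.mpr
          ⟨by have := (List.isChain_cons_cons.mp ch).1; omega, (List.isChain_cons_cons.mp ch).2⟩
    · intro x hx
      rcases List.mem_cons.mp hx with rfl | hx
      · rw [Nat.odd_iff] at hao ⊢; omega
      · exact hodd x (List.mem_cons.mpr (Or.inr hx))
  have hsplit : {l | QB (m + 3) l}
      = v1 '' {l | QB (m + 2) l} ∪ v2 '' {l | QB (m + 1) l} := by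
    apply Set.Subset.antisymm
    · rintro l ⟨ne, ch, hodd, hsum⟩
      match l, ne, ch, hodd, hsum with
      | [a], _, _, hodd, hsum =>
        right
        simp only [List.headI_cons, List.length_cons, List.length_nil] at hsum
        have hao : Odd a := hodd a (by simp)
        have ha3 : a = m + 3 := by omega
        refine ⟨[a - 2], ⟨by simp, List.isChain_singleton _, ?_, ?_⟩, ?_⟩
        · intro x hx
          simp only [List.mem_cons, List.not_mem_nil, or_false] at hx
          subst hx
          rw [Nat.odd_iff] at hao ⊢; omega
        · simp only [List.headI_cons, List.length_cons, List.length_nil]; omega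
        · rw [show v2 [a - 2] = [a - 2 + 2] from rfl]
          have : a - 2 + 2 = a := by omega
          rw [this]
      | a :: b :: t, _, ch, hodd, hsum =>
        have h1 := (List.isChain_cons_cons.mp ch).1
        have h2 := (List.isChain_cons_cons.mp ch).2
        have hao : Odd a := hodd a (by simp)
        have hbo : Odd b := hodd b (by simp)
        simp only [List.headI_cons, List.length_cons] at hsum
        by_cases hab : a = b
        · left
          refine ⟨b :: t, ⟨by simp, h2,
            fun x hx => hodd x (List.mem_cons.mpr (Or.inr hx)), ?_⟩, ?_⟩
          · simp only [List.headI_cons, List.length_cons]; omega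
          · rw [show v1 (b :: t) = b :: b :: t from rfl, hab]
        · right
          have hab2 : b + 2 ≤ a := by
            rw [Nat.odd_iff] at hao hbo; omega
          refine ⟨(a - 2) :: b :: t, ⟨by simp, ?_, ?_, ?_⟩, ?_⟩
          · exact List.isChain_cons_cons.mpr ⟨by omega, h2⟩
          · intro x hx
            rcases List.mem_cons.mp hx with rfl | hx
            · rw [Nat.odd_iff] at hao ⊢; omega
            · exact hodd x (List.mem_cons.mpr (Or.inr hx))
          · simp only [List.headI_cons, List.length_cons]; omega
          · rw [show v2 ((a - 2) :: b :: t) = (a - 2 + 2) :: b :: t from rfl]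
            have : a - 2 + 2 = a := by omega
            rw [this]
    · exact Set.union_subset himg1 himg2
  have hdisj : Disjoint (v1 '' {l | QB (m + 2) l}) (v2 '' {l | QB (m + 1) l}) := by
    rw [Set.disjoint_left]
    rintro _ ⟨l, ⟨ne, ch, hodd, hsum⟩, rfl⟩ ⟨l', ⟨ne', ch', hodd', hsum'⟩, heq⟩
    obtain ⟨a, t, rfl⟩ := List.exists_cons_of_ne_nil ne
    obtain ⟨a', t', rfl⟩ := List.exists_cons_of_ne_nil ne'
    rw [show v2 (a' :: t') = (a' + 2) :: t' from rfl,
      show v1 (a :: t) = a :: a :: t from rfl] at heq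
    simp only [List.cons.injEq] at heq
    obtain ⟨h1, h2⟩ := heq
    subst h2
    have h3 := (List.isChain_cons_cons.mp ch').1
    omega
  have hinj1 : Set.InjOn v1 {l | QB (m + 2) l} := by
    rintro l _ l' _ heq
    simp only [hv1, List.cons.injEq] at heq
    exact heq.2
  have hinj2 : Set.InjOn v2 {l | QB (m + 1) l} := by
    rintro l hl l' hl' heq
    obtain ⟨a, t, rfl⟩ := List.exists_cons_of_ne_nil hl.1
    obtain ⟨a', t', rfl⟩ := List.exists_cons_of_ne_nil hl'.1
    rw [show v2 (a :: t) = (a + 2) :: t from rfl,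
      show v2 (a' :: t') = (a' + 2) :: t' from rfl] at heq
    simp only [List.cons.injEq] at heq
    obtain ⟨h1, h2⟩ := heq
    have : a = a' := by omega
    rw [this, h2]
  rw [hsplit, Set.ncard_union_eq hdisj ((finQB (m + 2)).image _) ((finQB (m + 1)).image _),
    Set.ncard_image_of_injOn hinj1, Set.ncard_image_of_injOn hinj2]

lemma baseQA1 : {l | QA 1 l} = {[1]} := by
  ext l
  simp only [Set.mem_setOf_eq, Set.mem_singleton_iff]
  constructor
  · rintro ⟨ne, ch, pos, hsum⟩
    match l, ne with
    | [a], _ =>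
      simp only [List.headI_cons, List.length_cons, List.length_nil] at hsum
      have : a = 1 := by omega
      rw [this]
    | a :: b :: t, _ =>
      have h1 := (List.isChain_cons_cons.mp ch).1
      have hb : 0 < b := pos b (by simp)
      simp only [List.headI_cons, List.length_cons] at hsum
      omega
  · rintro rfl
    exact ⟨by simp, List.isChain_singleton _, by simp, by simp⟩

lemma baseQA2 : {l | QA 2 l} = {[2]} := by
  ext l
  simp only [Set.mem_setOf_eq, Set.mem_singleton_iff]
  constructor
  · rintro ⟨ne, ch, pos, hsum⟩
    match l, ne with
    | [a], _ =>
      simp only [List.headI_cons, List.length_cons, List.length_nil] at hsum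
      have : a = 2 := by omega
      rw [this]
    | a :: b :: t, _ =>
      have h1 := (List.isChain_cons_cons.mp ch).1
      have hb : 0 < b := pos b (by simp)
      simp only [List.headI_cons, List.length_cons] at hsum
      omega
  · rintro rfl
    exact ⟨by simp, List.isChain_singleton _, by simp, by simp⟩

lemma baseQB1 : {l | QB 1 l} = {[1]} := by
  ext l
  simp only [Set.mem_setOf_eq, Set.mem_singleton_iff]
  constructor
  · rintro ⟨ne, ch, hodd, hsum⟩
    match l, ne with
    | [a], _ =>
      simp only [List.headI_cons, List.length_cons, List.length_nil] at hsum
      have : a = 1 := by omega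
      rw [this]
    | a :: b :: t, _ =>
      have ha : 0 < a := (hodd a (by simp)).pos
      simp only [List.headI_cons, List.length_cons] at hsum
      omega
  · rintro rfl
    refine ⟨by simp, List.isChain_singleton _, ?_, by simp⟩
    intro x hx
    simp only [List.mem_cons, List.not_mem_nil, or_false] at hx
    subst hx
    simp
  
lemma baseQB2 : {l | QB 2 l} = {[1, 1]} := by
  ext l
  simp only [Set.mem_setOf_eq, Set.mem_singleton_iff]
  constructor
  · rintro ⟨ne, ch, hodd, hsum⟩
    match l, ne, ch, hodd, hsum with
    | [a], _, _, hodd, hsum =>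
      have ha : Odd a := hodd a (by simp)
      rw [Nat.odd_iff] at ha
      simp only [List.headI_cons, List.length_cons, List.length_nil] at hsum
      omega
    | [a, b], _, ch, hodd, hsum =>
      have ha : Odd a := hodd a (by simp)
      have hb : Odd b := hodd b (by simp)
      have h1 := (List.isChain_cons_cons.mp ch).1
      rw [Nat.odd_iff] at ha hb
      simp only [List.headI_cons, List.length_cons, List.length_nil] at hsum
      have ha1 : a = 1 := by omega
      have hb1 : b = 1 := by omega
      rw [ha1, hb1]
    | a :: b :: c :: t, _, _, hodd, hsum =>
      have ha : Odd a := hodd a (by simp)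
      rw [Nat.odd_iff] at ha
      simp only [List.headI_cons, List.length_cons] at hsum
      omega
  · rintro rfl
    refine ⟨by simp, ?_, ?_, by simp⟩
    · exact List.isChain_cons_cons.mpr ⟨le_refl _, List.isChain_singleton _⟩
    · intro x hx
      simp only [List.mem_cons, List.not_mem_nil, or_false] at hx
      rcases hx with rfl | rfl <;> simp

lemma cardQA (n : ℕ) : {l | QA (n + 1) l}.ncard = Nat.fib (n + 1) := by
  induction n using Nat.strong_induction_on with
  | _ n ih =>
    rcases n with _ | _ | m
    · rw [show (0 : ℕ) + 1 = 1 from rfl, baseQA1]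
      simp
    · rw [show (0 : ℕ) + 1 + 1 = 2 from rfl, baseQA2]
      simp
    · have e1 : {l | QA (m + 2) l}.ncard = Nat.fib (m + 2) := ih (m + 1) (by omega)
      have e2 : {l | QA (m + 1) l}.ncard = Nat.fib (m + 1) := ih m (by omega)
      show {l | QA (m + 3) l}.ncard = Nat.fib (m + 3)
      have e3 : Nat.fib (m + 3) = Nat.fib (m + 1) + Nat.fib (m + 2) := Nat.fib_add_two
      rw [recurA m, e1, e2, e3]
      omega

lemma cardQB (n : ℕ) : {l | QB (n + 1) l}.ncard = Nat.fib (n + 1) := by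
  induction n using Nat.strong_induction_on with
  | _ n ih =>
    rcases n with _ | _ | m
    · rw [show (0 : ℕ) + 1 = 1 from rfl, baseQB1]
      simp
    · rw [show (0 : ℕ) + 1 + 1 = 2 from rfl, baseQB2]
      simp
    · have e1 : {l | QB (m + 2) l}.ncard = Nat.fib (m + 2) := ih (m + 1) (by omega)
      have e2 : {l | QB (m + 1) l}.ncard = Nat.fib (m + 1) := ih m (by omega)
      show {l | QB (m + 3) l}.ncard = Nat.fib (m + 3)
      have e3 : Nat.fib (m + 3) = Nat.fib (m + 1) + Nat.fib (m + 2) := Nat.fib_add_two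
      rw [recurB m, e1, e2, e3]
      omega

theorem stmt1 (n : ℕ) (hn : 0 < n) :
    Nat.card {l : List ℕ // IsPartition l ∧ perimeter l = n ∧ l.Nodup}
      = Nat.card {l : List ℕ // IsPartition l ∧ perimeter l = n ∧ ∀ x ∈ l, Odd x} := by
  obtain ⟨m, rfl⟩ : ∃ m, n = m + 1 := ⟨n - 1, by omega⟩
  have eA : Nat.card {l : List ℕ // IsPartition l ∧ perimeter l = m + 1 ∧ l.Nodup}
      = Nat.card {l : List ℕ // QA (m + 1) l} :=
    Nat.card_congr (Equiv.subtypeEquivRight (QA_iff (m + 1)))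
  have eB : Nat.card {l : List ℕ // IsPartition l ∧ perimeter l = m + 1 ∧ ∀ x ∈ l, Odd x}
      = Nat.card {l : List ℕ // QB (m + 1) l} :=
    Nat.card_congr (Equiv.subtypeEquivRight (QB_iff (m + 1)))
  rw [eA, eB]
  have hA : Nat.card {l : List ℕ // QA (m + 1) l} = {l | QA (m + 1) l}.ncard :=
    Nat.card_coe_set_eq _
  have hB : Nat.card {l : List ℕ // QB (m + 1) l} = {l | QB (m + 1) l}.ncard :=
    Nat.card_coe_set_eq _
  rw [hA, hB, cardQA, cardQB]
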